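/- Suppose a group G acts uniformly equicontinuously on a Hausdorff uniform space X and the action has small scale bounded orbits. Let B be a basis of G-invariant entourages of X; for F ⊆ E in B there is a uniformly continuous map φ_{FE} : X/G_F → X/G_E sending the G_F-orbit of x to its G_E-orbit, giving an inverse system of uniform spaces {X/G_E}_{E∈B} (indexed by B ordered by reverse inclusion), where each X/G_E carries the uniform structure generated by its orbit map. Then the map X → lim_{E∈B} X/G_E sending x to the thread of its orbits is a uniform embedding; if moreover the orbit map p : X → X/G has complete fibers, it is a uniform equivalence. -/

import Mathlib

open Filter Set

universe u v

section Actions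

variable (G : Type*) (X : Type*)

/-- The action of `G` on the uniform space `X` is neutral. -/
def IsNeutralAction [SMul G X] [UniformSpace X] : Prop :=
  ∀ E ∈ uniformity X, ∃ F ∈ uniformity X,
    ∀ (x y : X) (g : G), (x, g • y) ∈ F → ∃ h : G, (h • x, y) ∈ E

/-- `G_E`: the subgroup of `G` generated by the elements that move some point
of `X` within the entourage `E`. -/
def subgroupEnt [Group G] [MulAction G X] (E : Set (X × X)) : Subgroup G :=
  Subgroup.closure { g : G | ∃ x : X, (x, g • x) ∈ E }

/-- The action has small scale bounded orbits. -/
def SmallScaleBoundedOrbits [Group G] [MulAction G X] [UniformSpace X] : Prop :=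
  ∀ E ∈ uniformity X, ∃ F ∈ uniformity X,
    ∀ g ∈ subgroupEnt G X F, ∀ x : X, (x, g • x) ∈ E

/-- The action is uniformly properly discontinuous. -/
def UnifProperlyDisc [Group G] [SMul G X] [UniformSpace X] : Prop :=
  ∃ E₀ ∈ uniformity X, ∀ (g : G) (x : X), (x, g • x) ∈ E₀ → g = 1

/-- The action is faithful. -/
def FaithfulAction [Group G] [SMul G X] : Prop :=
  ∀ g : G, (∀ x : X, g • x = x) → g = 1

/-- The action is uniformly equicontinuous. -/
def UnifEquicont [SMul G X] [UniformSpace X] : Prop :=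
  ∀ E ∈ uniformity X, ∃ F ∈ uniformity X,
    ∀ (g : G) (x y : X), (x, y) ∈ F → (g • x, g • y) ∈ E

/-- The entourage `E` is `G`-invariant. -/
def InvariantEnt [SMul G X] (E : Set (X × X)) : Prop :=
  ∀ (g : G) (x y : X), (x, y) ∈ E → (g • x, g • y) ∈ E

end Actions

theorem subgroupEnt_mono (G : Type u) (X : Type v) [Group G] [MulAction G X]
    {F E : Set (X × X)} (h : F ⊆ E) : subgroupEnt G X F ≤ subgroupEnt G X E :=
  Subgroup.closure_mono (fun _ hg => hg.imp (fun _ hx => h hx))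

theorem orbitRel_mono {G : Type u} [Group G] {X : Type v} [MulAction G X]
    {H K : Subgroup G} (hHK : H ≤ K) {x y : X}
    (h : (MulAction.orbitRel H X).r x y) : (MulAction.orbitRel K X).r x y := by
  obtain ⟨g, hg⟩ := h
  exact ⟨⟨g.1, hHK g.2⟩, hg⟩

/-- The inverse limit of the orbit spaces `X/G_E`, `E ∈ B`, ordered by reverse
inclusion, realized as the set of threads of orbits. -/
abbrev orbitQuotLim (G : Type u) [Group G] (X : Type v) [MulAction G X]
    [∀ H : Subgroup G, UniformSpace (Quotient (MulAction.orbitRel H X))]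
    (B : Set (Set (X × X))) : Type _ :=
  { t : ∀ i : B, Quotient (MulAction.orbitRel ↥(subgroupEnt G X i.1) X) //
    ∀ (i j : B) (_ : i.1 ⊆ j.1) (x : X),
      t i = Quotient.mk (MulAction.orbitRel ↥(subgroupEnt G X i.1) X) x →
        t j = Quotient.mk (MulAction.orbitRel ↥(subgroupEnt G X j.1) X) x }

/-- The natural map `X → lim_{E ∈ B} X/G_E` sending a point to the thread of
its orbits. -/
def toOrbitQuotLim (G : Type u) [Group G] (X : Type v) [MulAction G X]
    [∀ H : Subgroup G, UniformSpace (Quotient (MulAction.orbitRel H X))]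
    (B : Set (Set (X × X))) : X → orbitQuotLim G X B :=
  fun x => ⟨fun i => Quotient.mk (MulAction.orbitRel ↥(subgroupEnt G X i.1) X) x,
    fun i j hij x' hx => Quotient.sound
      (orbitRel_mono (subgroupEnt_mono G X hij) (Quotient.exact hx))⟩

/-- Two points have the same `H`-orbit class iff they differ by an element of `H`. -/
theorem quot_mk_eq_iff' {G : Type u} [Group G] {X : Type v} [MulAction G X]
    (H : Subgroup G) {x y : X} :
    Quotient.mk (MulAction.orbitRel ↥H X) x = Quotient.mk (MulAction.orbitRel ↥H X) y ↔
      ∃ g : G, g ∈ H ∧ g • y = x := by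
  constructor
  · intro h
    obtain ⟨g, hg⟩ := Quotient.exact h
    exact ⟨g.1, g.2, hg⟩
  · rintro ⟨g, hg, rfl⟩
    exact Quotient.sound ⟨⟨g, hg⟩, rfl⟩

/-- Suppose `G` acts uniformly equicontinuously on a Hausdorff uniform space
`X` with small scale bounded orbits, `B` is a basis of `G`-invariant entourages
of `X`, and each orbit space `X/G_E` carries the uniform structure generated by
its orbit map.  Then the natural map `X → lim_{E ∈ B} X/G_E` is a uniform
embedding, and if the orbit map `X → X/G` has complete fibers (every orbit is
complete) it is a uniform equivalence. -/
theorem toOrbitQuotLim_isUniformEmbedding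
    {G : Type u} [Group G] {X : Type v} [UniformSpace X] [MulAction G X]
    [T2Space X]
    (hue : UnifEquicont G X) (hssbo : SmallScaleBoundedOrbits G X)
    (B : Set (Set (X × X)))
    (hBent : ∀ E ∈ B, E ∈ uniformity X)
    (hBbasis : ∀ S ∈ uniformity X, ∃ E ∈ B, E ⊆ S)
    (hBinv : ∀ E ∈ B, InvariantEnt G X E)
    [∀ H : Subgroup G, UniformSpace (Quotient (MulAction.orbitRel H X))]
    (huH : ∀ E ∈ B,
      (uniformity (Quotient (MulAction.orbitRel ↥(subgroupEnt G X E) X))).HasBasis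
        (fun D : Set (X × X) => D ∈ uniformity X)
        (fun D => Prod.map (Quotient.mk (MulAction.orbitRel ↥(subgroupEnt G X E) X))
          (Quotient.mk (MulAction.orbitRel ↥(subgroupEnt G X E) X)) '' D)) :
    IsUniformEmbedding (toOrbitQuotLim G X B) ∧
      ((∀ x : X, IsComplete (MulAction.orbit G x)) →
        ∃ e : X ≃ᵤ orbitQuotLim G X B, ⇑e = toOrbitQuotLim G X B) := by
  
  classical
  -- Each orbit map `X → X/G_E` is uniformly continuous.
  have hmkUC : ∀ E ∈ B, UniformContinuous
      (Quotient.mk (MulAction.orbitRel ↥(subgroupEnt G X E) X)) := by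
    intro E hE
    rw [UniformContinuous, (huH E hE).tendsto_right_iff]
    intro D hD
    filter_upwards [hD] with p hp
    exact ⟨p, hp, rfl⟩
  have hfUC : UniformContinuous (toOrbitQuotLim G X B) := by
    have h1 : UniformContinuous fun x : X =>
        (fun i : B => Quotient.mk (MulAction.orbitRel ↥(subgroupEnt G X i.1) X) x) := by
      rw [uniformContinuous_pi]
      intro i
      exact hmkUC i.1 i.2
    exact h1.subtype_mk _
  -- Projections from the limit are uniformly continuous.
  have hπUC : ∀ i : B, UniformContinuous (fun t : orbitQuotLim G X B => t.1 i) :=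
    fun i => (Pi.uniformContinuous_proj _ i).comp uniformContinuous_subtype_val
  -- The comap of the uniformity of the limit refines the uniformity of `X`.
  have hprelim : ∀ S ∈ uniformity X, S ∈ Filter.comap
      (fun p : X × X => (toOrbitQuotLim G X B p.1, toOrbitQuotLim G X B p.2))
      (uniformity (orbitQuotLim G X B)) := by
    intro S hS
    obtain ⟨S₁, hS₁u, hS₁symm, hS₁comp⟩ := comp_symm_mem_uniformity_sets hS
    obtain ⟨F, hFu, hF⟩ := hssbo S₁ hS₁u
    obtain ⟨E, hEB, hEsub⟩ := hBbasis (F ∩ S₁) (inter_mem hFu hS₁u)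
    have hQmem : Prod.map (Quotient.mk (MulAction.orbitRel ↥(subgroupEnt G X E) X))
        (Quotient.mk (MulAction.orbitRel ↥(subgroupEnt G X E) X)) '' E
        ∈ uniformity (Quotient (MulAction.orbitRel ↥(subgroupEnt G X E) X)) :=
      (huH E hEB).mem_of_mem (hBent E hEB)
    have hT := Filter.mem_map.mp ((hπUC ⟨E, hEB⟩) hQmem)
    rw [Filter.mem_comap]
    refine ⟨_, hT, ?_⟩
    rintro ⟨x, y⟩ hxy
    obtain ⟨⟨a, b⟩, hab, heq⟩ := hxy
    have h1 : Quotient.mk (MulAction.orbitRel ↥(subgroupEnt G X E) X) a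
        = Quotient.mk (MulAction.orbitRel ↥(subgroupEnt G X E) X) x :=
      congrArg Prod.fst heq
    have h2 : Quotient.mk (MulAction.orbitRel ↥(subgroupEnt G X E) X) b
        = Quotient.mk (MulAction.orbitRel ↥(subgroupEnt G X E) X) y :=
      congrArg Prod.snd heq
    obtain ⟨g, hg, hgx⟩ := (quot_mk_eq_iff' _).mp h1.symm
    obtain ⟨h, hh, hhy⟩ := (quot_mk_eq_iff' _).mp h2.symm
    -- h1.symm : mk x = mk a, so `g • a = x`.
    have hinv : (x, (g * h⁻¹) • y) ∈ E := by
      have := hBinv E hEB g a b hab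
      rw [hgx] at this
      have hb : h⁻¹ • y = b := by rw [← hhy, inv_smul_smul]
      rwa [show (g * h⁻¹) • y = g • (h⁻¹ • y) from mul_smul g h⁻¹ y, hb]
    have hmemF : g * h⁻¹ ∈ subgroupEnt G X F :=
      subgroupEnt_mono G X (hEsub.trans inter_subset_left)
        (mul_mem hg (inv_mem hh))
    have hstep1 : (x, (g * h⁻¹) • y) ∈ S₁ := (hEsub.trans inter_subset_right) hinv
    have hstep2 : ((g * h⁻¹) • y, y) ∈ S₁ :=
      (SetRel.comm (R := S₁)).mp (hF _ hmemF y)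
    exact hS₁comp (SetRel.prodMk_mem_comp hstep1 hstep2)
  -- injectivity
  have hinj : Function.Injective (toOrbitQuotLim G X B) := by
    intro x y hxy
    refine (eq_of_uniformity fun {V} hV => ?_).symm
    obtain ⟨F, hFu, hF⟩ := hssbo V hV
    obtain ⟨E, hEB, hEF⟩ := hBbasis F hFu
    have h1 : Quotient.mk (MulAction.orbitRel ↥(subgroupEnt G X E) X) x
        = Quotient.mk (MulAction.orbitRel ↥(subgroupEnt G X E) X) y :=
      congrFun (congrArg Subtype.val hxy) ⟨E, hEB⟩
    obtain ⟨g, hg, rfl⟩ := (quot_mk_eq_iff' _).mp h1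
    exact hF g (subgroupEnt_mono G X hEF hg) y
  have hemb : IsUniformEmbedding (toOrbitQuotLim G X B) :=
    ⟨⟨le_antisymm (Filter.le_def.mpr hprelim) (Filter.tendsto_iff_comap.mp hfUC)⟩, hinj⟩
  refine ⟨hemb, fun hcomp => ?_⟩
  -- surjectivity
  have hsurj : Function.Surjective (toOrbitQuotLim G X B) := by
    intro t
    obtain ⟨E₀, hE₀B, -⟩ := hBbasis Set.univ Filter.univ_mem
    set i₀ : B := ⟨E₀, hE₀B⟩ with hi₀
    set S : B → Set X := fun i =>
      (Quotient.mk (MulAction.orbitRel ↥(subgroupEnt G X i.1) X)) ⁻¹' {t.1 i} with hSdef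
    have hSne : ∀ i, (S i).Nonempty := by
      intro i
      obtain ⟨y, hy⟩ := Quot.exists_rep (t.1 i)
      exact ⟨y, hy⟩
    have hSel : ∀ (i : B) {y : X}, y ∈ S i →
        Quotient.mk (MulAction.orbitRel ↥(subgroupEnt G X i.1) X) y = t.1 i :=
      fun i {y} hy => hy
    have hSmono : ∀ i j : B, i.1 ⊆ j.1 → S i ⊆ S j := by
      intro i j hij y hy
      exact (t.2 i j hij y (hSel i hy).symm).symm
    have hdir : Directed (· ≥ ·) (fun i : B => Filter.principal (S i)) := by
      intro i j
      obtain ⟨k, hkB, hk⟩ := hBbasis (i.1 ∩ j.1) (inter_mem (hBent i.1 i.2) (hBent j.1 j.2))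
      exact ⟨⟨k, hkB⟩,
        Filter.principal_mono.mpr (hSmono _ i (hk.trans inter_subset_left)),
        Filter.principal_mono.mpr (hSmono _ j (hk.trans inter_subset_right))⟩
    haveI : Nonempty B := ⟨i₀⟩
    set 𝔉 := ⨅ i : B, Filter.principal (S i) with h𝔉
    haveI h𝔉ne : 𝔉.NeBot :=
      Filter.iInf_neBot_of_directed' hdir
        (fun i => Filter.principal_neBot_iff.mpr (hSne i))
    have hmem : ∀ i : B, S i ∈ 𝔉 :=
      fun i => Filter.mem_iInf_of_mem i (Filter.mem_principal_self _)
    have hcauchy : Cauchy 𝔉 := by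
      rw [cauchy_iff]
      refine ⟨h𝔉ne, fun D hD => ?_⟩
      obtain ⟨F, hFu, hF⟩ := hssbo D hD
      obtain ⟨E, hEB, hEF⟩ := hBbasis F hFu
      refine ⟨S ⟨E, hEB⟩, hmem _, ?_⟩
      rintro ⟨y, z⟩ ⟨hy, hz⟩
      have heq : Quotient.mk (MulAction.orbitRel ↥(subgroupEnt G X E) X) z
          = Quotient.mk (MulAction.orbitRel ↥(subgroupEnt G X E) X) y :=
        (hSel ⟨E, hEB⟩ hz).trans (hSel ⟨E, hEB⟩ hy).symm
      obtain ⟨g, hg, rfl⟩ := (quot_mk_eq_iff' _).mp heq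
      exact hF g (subgroupEnt_mono G X hEF hg) y
    obtain ⟨x₀, hx₀⟩ := hSne i₀
    have hO𝔉 : 𝔉 ≤ Filter.principal (MulAction.orbit G x₀) := by
      refine Filter.le_principal_iff.mpr (Filter.mem_of_superset (hmem i₀) ?_)
      intro y hy
      have heq : Quotient.mk (MulAction.orbitRel ↥(subgroupEnt G X E₀) X) y
          = Quotient.mk (MulAction.orbitRel ↥(subgroupEnt G X E₀) X) x₀ :=
        (hSel i₀ hy).trans (hSel i₀ hx₀).symm
      obtain ⟨g, hg, rfl⟩ := (quot_mk_eq_iff' _).mp heq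
      exact ⟨g, rfl⟩
    obtain ⟨x, hxO, hlim⟩ := hcomp x₀ 𝔉 hcauchy hO𝔉
    refine ⟨x, Subtype.ext (funext fun j => ?_)⟩
    show Quotient.mk (MulAction.orbitRel ↥(subgroupEnt G X j.1) X) x = t.1 j
    obtain ⟨D, hDB, hDj⟩ := hBbasis j.1 (hBent j.1 j.2)
    obtain ⟨k, hkB, hk⟩ := hBbasis (D ∩ E₀) (inter_mem (hBent D hDB) (hBent E₀ hE₀B))
    have hball : UniformSpace.ball x D ∈ 𝔉 :=
      hlim (UniformSpace.ball_mem_nhds x (hBent D hDB))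
    obtain ⟨y, hyk, hyD⟩ := Filter.nonempty_of_mem (Filter.inter_mem (hmem ⟨k, hkB⟩) hball)
    have hyO : y ∈ MulAction.orbit G x₀ := by
      have h1 : y ∈ S i₀ := hSmono ⟨k, hkB⟩ i₀ (hk.trans inter_subset_right) hyk
      have heq : Quotient.mk (MulAction.orbitRel ↥(subgroupEnt G X E₀) X) y
          = Quotient.mk (MulAction.orbitRel ↥(subgroupEnt G X E₀) X) x₀ :=
        (hSel i₀ h1).trans (hSel i₀ hx₀).symm
      obtain ⟨g, hg, rfl⟩ := (quot_mk_eq_iff' _).mp heq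
      exact ⟨g, rfl⟩
    obtain ⟨gx, hgx⟩ := hxO
    obtain ⟨gy, hgy⟩ := hyO
    have hxy : x = (gx * gy⁻¹) • y := by
      rw [← hgx, ← hgy, smul_smul, inv_mul_cancel_right]
    have hD2 : (y, (gx * gy⁻¹)⁻¹ • y) ∈ D := by
      have := hBinv D hDB (gx * gy⁻¹)⁻¹ x y hyD
      rwa [hxy, inv_smul_smul] at this
    have hmemD : gx * gy⁻¹ ∈ subgroupEnt G X D :=
      (Subgroup.inv_mem_iff _).mp (Subgroup.subset_closure ⟨y, hD2⟩)
    have hmemj : gx * gy⁻¹ ∈ subgroupEnt G X j.1 := subgroupEnt_mono G X hDj hmemD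
    have hyj : Quotient.mk (MulAction.orbitRel ↥(subgroupEnt G X j.1) X) y = t.1 j :=
      hSel j (hSmono ⟨k, hkB⟩ j ((hk.trans inter_subset_left).trans hDj) hyk)
    calc Quotient.mk (MulAction.orbitRel ↥(subgroupEnt G X j.1) X) x
        = Quotient.mk (MulAction.orbitRel ↥(subgroupEnt G X j.1) X) y := by
          rw [hxy]; exact (quot_mk_eq_iff' _).mpr ⟨gx * gy⁻¹, hmemj, rfl⟩
      _ = t.1 j := hyj
  exact ⟨(Equiv.ofBijective _ ⟨hinj, hsurj⟩).toUniformEquivOfIsUniformInducing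
    hemb.isUniformInducing, rfl⟩
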